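/- With G_k defined by the recursion k·G_k = (1/2)(d²G_{k−1} + ∑_{r=1}^k dG_{r−1}·dG_{k−r}) where d = ∑_{l≥0} V_{l+1}∂/∂V_l and G_0 = V_0, the partition function Z := exp(∑_{k≥0} ħ^k G_k) satisfies the heat-type equation ∂Z/∂ħ = (1/2)·d²Z as an identity of formal power series in ħ. -/

import Mathlib

open MvPolynomial

/-- The coefficient ring `ℚ[V_0, V_1, V_2, ..., E]`, where the variables indexed
by `Sum.inl l` are the `V_l`, and the extra variable `E = X (Sum.inr ())`
represents `exp(G_0) = exp(V_0)`. -/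
abbrev HeatRing : Type := MvPolynomial (ℕ ⊕ Unit) ℚ

/-- The image of each variable under the derivation `d`: `d V_l = V_{l+1}` and
`d E = V_1·E` (since `E` stands for `exp(V_0)`). -/
noncomputable def dVar : ℕ ⊕ Unit → HeatRing
  | Sum.inl l => X (Sum.inl (l + 1))
  | Sum.inr _ => X (Sum.inl 1) * X (Sum.inr ())

/-- The derivation `d = ∑ V_{l+1} ∂/∂V_l` (with `d(exp V_0) = V_1·exp V_0`). -/
noncomputable def dOp (p : HeatRing) : HeatRing :=
  ∑ v ∈ p.vars, dVar v * MvPolynomial.pderiv v p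

/-- `d` applied coefficientwise to a formal power series in `ħ`. -/
noncomputable def dPS (f : PowerSeries HeatRing) : PowerSeries HeatRing :=
  PowerSeries.mk fun n => dOp (PowerSeries.coeff (R := HeatRing) n f)

/-- Derivative `∂/∂ħ` of a formal power series in `ħ`. -/
noncomputable def hderiv (f : PowerSeries HeatRing) : PowerSeries HeatRing :=
  PowerSeries.mk fun n => ((n : HeatRing) + 1) * PowerSeries.coeff (R := HeatRing) (n + 1) f

/-- The exponential `exp f = ∑_j f^j/j!` of a power series `f` with vanishing
constant term. -/
noncomputable def exp0 (f : PowerSeries HeatRing) : PowerSeries HeatRing :=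
  PowerSeries.mk fun n =>
    ∑ j ∈ Finset.range (n + 1),
      ((1 : ℚ) / (Nat.factorial j : ℚ)) • PowerSeries.coeff (R := HeatRing) n (f ^ j)

lemma dOp_eq_sum {p : HeatRing} {s : Finset (ℕ ⊕ Unit)} (h : p.vars ⊆ s) :
    dOp p = ∑ v ∈ s, dVar v * MvPolynomial.pderiv v p := by
  refine Finset.sum_subset h fun v _ hv => ?_
  rw [pderiv_eq_zero_of_notMem_vars hv, mul_zero]

lemma dOp_add (p q : HeatRing) : dOp (p + q) = dOp p + dOp q := by
  rw [dOp_eq_sum (s := (p+q).vars ∪ p.vars ∪ q.vars) (by intro v hv; simp [hv]),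
    dOp_eq_sum (p := p) (s := (p+q).vars ∪ p.vars ∪ q.vars) (by intro v hv; simp [hv]),
    dOp_eq_sum (p := q) (s := (p+q).vars ∪ p.vars ∪ q.vars) (by intro v hv; simp [hv]),
    ← Finset.sum_add_distrib]
  simp [mul_add]

lemma dOp_mul (p q : HeatRing) : dOp (p * q) = dOp p * q + p * dOp q := by
  rw [dOp_eq_sum (s := (p*q).vars ∪ p.vars ∪ q.vars) (by intro v hv; simp [hv]),
    dOp_eq_sum (p := p) (s := (p*q).vars ∪ p.vars ∪ q.vars) (by intro v hv; simp [hv]),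
    dOp_eq_sum (p := q) (s := (p*q).vars ∪ p.vars ∪ q.vars) (by intro v hv; simp [hv]),
    Finset.sum_mul, Finset.mul_sum, ← Finset.sum_add_distrib]
  refine Finset.sum_congr rfl fun v _ => ?_
  rw [pderiv_mul]; ring

lemma dOp_zero : dOp 0 = 0 := by simp [dOp]

lemma dOp_smul (q : ℚ) (p : HeatRing) : dOp (q • p) = q • dOp p := by
  rcases eq_or_ne q 0 with rfl | hq
  · simp [dOp_zero]
  · rw [dOp_eq_sum (p := q • p) (s := p.vars) (by rw [smul_eq_C_mul, vars_C_mul _ hq]),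
      dOp, Finset.smul_sum]
    refine Finset.sum_congr rfl fun v _ => ?_
    rw [(pderiv v).map_smul, mul_smul_comm]

lemma dOp_X (v : ℕ ⊕ Unit) : dOp (X v) = dVar v := by
  rw [dOp_eq_sum (s := {v}) (by rw [vars_X])]
  simp


open PowerSeries

local notation "cf" => PowerSeries.coeff (R := HeatRing)

lemma coeff_dPS (f : PowerSeries HeatRing) (n : ℕ) : cf n (dPS f) = dOp (cf n f) :=
  PowerSeries.coeff_mk _ _

lemma hderiv_eq (f : PowerSeries HeatRing) : hderiv f = PowerSeries.derivativeFun f := by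
  ext n : 1
  rw [show f.derivativeFun = d⁄dX HeatRing f from rfl, coeff_derivativeFun, hderiv, coeff_mk]
  push_cast; ring

lemma coeff_hderiv (f : PowerSeries HeatRing) (n : ℕ) :
    cf n (hderiv f) = ((n : HeatRing) + 1) * cf (n + 1) f := PowerSeries.coeff_mk _ _

lemma hderiv_add (f g : PowerSeries HeatRing) : hderiv (f + g) = hderiv f + hderiv g := by
  simp [hderiv_eq, derivativeFun_add]

lemma hderiv_mul (f g : PowerSeries HeatRing) :
    hderiv (f * g) = hderiv f * g + f * hderiv g := by
  simp only [hderiv_eq, derivativeFun_mul, smul_eq_mul]; ring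

lemma Csmul (q : ℚ) (f : PowerSeries HeatRing) : (C q : HeatRing) • f = q • f := by
  rw [← MvPolynomial.algebraMap_eq, algebraMap_smul]

lemma qsmul_eq (q : ℚ) (f : PowerSeries HeatRing) :
    q • f = PowerSeries.C (R := HeatRing) (C q) * f := by
  rw [← Csmul, PowerSeries.smul_eq_C_mul]

lemma hderiv_smul (q : ℚ) (f : PowerSeries HeatRing) : hderiv (q • f) = q • hderiv f := by
  rw [← Csmul q f, ← Csmul q (hderiv f), hderiv_eq, hderiv_eq, derivativeFun_smul]

lemma coeff_qsmul (q : ℚ) (f : PowerSeries HeatRing) (n : ℕ) :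
    cf n (q • f) = q • cf n f := by
  rw [← Csmul, PowerSeries.coeff_smul, smul_eq_mul, ← MvPolynomial.algebraMap_eq,
    ← algebraMap_smul HeatRing q (cf n f), smul_eq_mul]

lemma dPS_add (f g : PowerSeries HeatRing) : dPS (f + g) = dPS f + dPS g := by
  ext n : 1; simp [coeff_dPS, dOp_add]

lemma dPS_smul (q : ℚ) (f : PowerSeries HeatRing) : dPS (q • f) = q • dPS f := by
  ext n : 1; simp [coeff_dPS, coeff_qsmul, dOp_smul]

lemma dOp_sum {α : Type*} (s : Finset α) (f : α → HeatRing) :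
    dOp (∑ i ∈ s, f i) = ∑ i ∈ s, dOp (f i) := by
  classical
  induction s using Finset.induction_on with
  | empty => simp [dOp_zero]
  | insert a s h ih => rw [Finset.sum_insert h, Finset.sum_insert h, dOp_add, ih]

lemma dPS_mul (f g : PowerSeries HeatRing) :
    dPS (f * g) = dPS f * g + f * dPS g := by
  refine PowerSeries.ext fun n => ?_
  rw [coeff_dPS, PowerSeries.coeff_mul, dOp_sum, map_add, PowerSeries.coeff_mul,
    PowerSeries.coeff_mul, ← Finset.sum_add_distrib]
  refine Finset.sum_congr rfl fun v _ => ?_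
  rw [dOp_mul, coeff_dPS, coeff_dPS]

lemma dPS_C (c : HeatRing) : dPS (PowerSeries.C (R := HeatRing) c) = PowerSeries.C (R := HeatRing) (dOp c) := by
  ext n : 1
  rw [coeff_dPS, PowerSeries.coeff_C, PowerSeries.coeff_C]
  split <;> simp [dOp_zero]

lemma hderiv_C (c : HeatRing) : hderiv (PowerSeries.C (R := HeatRing) c) = 0 := by
  rw [hderiv_eq]; exact derivativeFun_C

lemma coeff_exp0 (g : PowerSeries HeatRing) (n : ℕ) :
    cf n (exp0 g) = ∑ j ∈ Finset.range (n + 1),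
      ((1 : ℚ) / (Nat.factorial j : ℚ)) • cf n (g ^ j) := PowerSeries.coeff_mk _ _

lemma coeff_pow_zero {g : PowerSeries HeatRing} (hg : cf 0 g = 0) :
    ∀ j m : ℕ, m < j → cf m (g ^ j) = 0 := by
  intro j
  induction j with
  | zero => intro m hm; omega
  | succ j ih =>
    intro m hm
    rw [pow_succ, mul_comm, PowerSeries.coeff_mul]
    refine Finset.sum_eq_zero fun p hp => ?_
    rcases Finset.HasAntidiagonal.mem_antidiagonal.mp hp with hpn
    rcases Nat.eq_zero_or_pos p.1 with h1 | h1
    · rw [h1] at hpn ⊢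
      rw [hg, zero_mul]
    · rw [ih p.2 (by omega), mul_zero]

section ExpDeriv

variable (δ : PowerSeries HeatRing → PowerSeries HeatRing)
  (hadd : ∀ f g, δ (f + g) = δ f + δ g)
  (hsmul : ∀ (q : ℚ) f, δ (q • f) = q • δ f)
  (hmul : ∀ f g, δ (f * g) = δ f * g + f * δ g)

include hadd hsmul hmul

lemma delta_one : δ 1 = 0 := by
  have := hmul 1 1
  simp only [one_mul, mul_one] at this
  exact (right_eq_add.mp this)

lemma delta_sum {α : Type*} (s : Finset α) (f : α → PowerSeries HeatRing) :
    δ (∑ i ∈ s, f i) = ∑ i ∈ s, δ (f i) := by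
  classical
  have h0 : δ 0 = 0 := by
    have h00 := hsmul 0 0; rw [zero_smul, zero_smul] at h00; exact h00
  induction s using Finset.induction_on with
  | empty => simpa using h0
  | insert a s h ih => rw [Finset.sum_insert h, Finset.sum_insert h, hadd, ih]

lemma delta_pow (g : PowerSeries HeatRing) :
    ∀ j : ℕ, δ (g ^ (j + 1)) = ((j : ℚ) + 1) • (δ g * g ^ j) := by
  intro j
  induction j with
  | zero => simp
  | succ j ih =>
    have h2 : g ^ (j + 2) = g * g ^ (j + 1) := by ring
    rw [h2, hmul, ih, pow_succ]
    push_cast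
    rw [qsmul_eq, qsmul_eq]
    have hC : (PowerSeries.C (R := HeatRing)) (C ((j : ℚ) + 1 + 1)) =
        (PowerSeries.C (R := HeatRing)) (C ((j : ℚ) + 1)) + 1 := by
      rw [map_add, map_add, map_one, map_one]
    rw [hC]; ring

lemma exp0_deriv (h0 : ∀ (f : PowerSeries HeatRing) (n : ℕ),
      (∀ m, m ≤ n + 1 → cf m f = 0) → cf n (δ f) = 0)
    (g : PowerSeries HeatRing) (hg : cf 0 g = 0) :
    δ (exp0 g) = δ g * exp0 g := by
  refine PowerSeries.ext fun n => ?_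
  set S : PowerSeries HeatRing :=
    ∑ j ∈ Finset.range (n + 2), ((1 : ℚ) / (Nat.factorial j : ℚ)) • g ^ j with hS
  have hcfS : ∀ m : ℕ, cf m S = ∑ j ∈ Finset.range (n + 2),
      ((1 : ℚ) / (Nat.factorial j : ℚ)) • cf m (g ^ j) := by
    intro m
    rw [hS, map_sum]
    exact Finset.sum_congr rfl fun j _ => coeff_qsmul _ _ _
  have hdiff : ∀ m, m ≤ n + 1 → cf m (exp0 g - S) = 0 := by
    intro m hm
    rw [map_sub, hcfS, coeff_exp0, sub_eq_zero]
    refine Finset.sum_subset (Finset.range_subset_range.mpr (by omega)) fun j _ hj => ?_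
    rw [coeff_pow_zero hg j m (by simpa using hj), smul_zero]
  have hsplit : δ (exp0 g) = δ S + δ (exp0 g - S) := by
    rw [← hadd]; congr 1; ring
  rw [hsplit, map_add, h0 _ n hdiff, add_zero]
  have hLHS : cf n (δ S) = ∑ j ∈ Finset.range (n + 1),
      ((1 : ℚ) / (Nat.factorial j : ℚ)) • cf n (δ g * g ^ j) := by
    rw [hS, delta_sum δ hadd hsmul hmul, map_sum]
    have : ∀ j ∈ Finset.range (n + 2),
        cf n (δ (((1 : ℚ) / (Nat.factorial j : ℚ)) • g ^ j)) =
        ((1 : ℚ) / (Nat.factorial j : ℚ)) • cf n (δ (g ^ j)) := fun j _ => by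
      rw [hsmul, coeff_qsmul]
    rw [Finset.sum_congr rfl this, Finset.sum_range_succ']
    have hz : ((1 : ℚ) / (Nat.factorial 0 : ℚ)) • cf n (δ (g ^ 0)) = 0 := by
      rw [pow_zero, delta_one δ hadd hsmul hmul, map_zero, smul_zero]
    rw [hz, add_zero]
    refine Finset.sum_congr rfl fun i _ => ?_
    rw [delta_pow δ hadd hsmul hmul, coeff_qsmul, smul_smul]
    congr 1
    rw [Nat.factorial_succ]
    push_cast
    have h1 : (Nat.factorial i : ℚ) ≠ 0 := Nat.cast_ne_zero.mpr (Nat.factorial_ne_zero i)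
    field_simp
  rw [hLHS, PowerSeries.coeff_mul]
  have hstep : ∀ p ∈ Finset.HasAntidiagonal.antidiagonal n,
      cf p.1 (δ g) * cf p.2 (exp0 g) = ∑ j ∈ Finset.range (n + 1),
        ((1 : ℚ) / (Nat.factorial j : ℚ)) • (cf p.1 (δ g) * cf p.2 (g ^ j)) := by
    intro p hp
    have hpn := Finset.HasAntidiagonal.mem_antidiagonal.mp hp
    rw [coeff_exp0]
    rw [Finset.sum_subset (Finset.range_subset_range.mpr (by omega : p.2 + 1 ≤ n + 1))
      (fun j _ hj => by rw [coeff_pow_zero hg j p.2 (by simpa using hj), smul_zero])]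
    rw [Finset.mul_sum]
    exact Finset.sum_congr rfl fun j _ => mul_smul_comm _ _ _
  rw [Finset.sum_congr rfl hstep, Finset.sum_comm]
  refine Finset.sum_congr rfl fun j _ => ?_
  rw [← Finset.smul_sum, PowerSeries.coeff_mul]

end ExpDeriv

/-- With `G_0 = V_0` and the recursion
`k·G_k = (1/2)(d²G_{k−1} + ∑_{r=1}^k dG_{r−1}·dG_{k−r})`, the partition function
`Z := exp(∑_{k≥0} ħ^k G_k) = exp(V_0)·exp(∑_{k≥1} ħ^k G_k)` satisfies the heat
equation `∂Z/∂ħ = (1/2)·d²Z` as formal power series in `ħ`. -/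
theorem heat_equation_for_partition_function (G : ℕ → HeatRing)
    (hG0 : G 0 = X (Sum.inl 0))
    (hrec : ∀ k : ℕ, 1 ≤ k →
      (k : HeatRing) * G k =
        MvPolynomial.C (1 / 2 : ℚ) * (dOp (dOp (G (k - 1))) +
          ∑ r ∈ Finset.Icc 1 k, dOp (G (r - 1)) * dOp (G (k - r)))) :
    hderiv (PowerSeries.C (R := HeatRing) (X (Sum.inr ())) *
        exp0 (PowerSeries.mk fun k => if k = 0 then 0 else G k)) =
      PowerSeries.C (R := HeatRing) (C (1 / 2 : ℚ)) *
        dPS (dPS (PowerSeries.C (R := HeatRing) (X (Sum.inr ())) *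
          exp0 (PowerSeries.mk fun k => if k = 0 then 0 else G k))) := by
  set g : PowerSeries HeatRing := PowerSeries.mk fun k => if k = 0 then 0 else G k with hgdef
  set E : PowerSeries HeatRing := PowerSeries.C (R := HeatRing) (X (Sum.inr ())) with hEdef
  set Ch : PowerSeries HeatRing := PowerSeries.C (R := HeatRing) (C (1 / 2 : ℚ)) with hChdef
  set CV1 : PowerSeries HeatRing := PowerSeries.C (R := HeatRing) (X (Sum.inl 1)) with hCV1def
  set CV2 : PowerSeries HeatRing := PowerSeries.C (R := HeatRing) (X (Sum.inl 2)) with hCV2def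
  have hg0 : cf 0 g = 0 := by rw [hgdef, PowerSeries.coeff_mk, if_pos rfl]
  have h0H : ∀ (f : PowerSeries HeatRing) (n : ℕ),
      (∀ m, m ≤ n + 1 → cf m f = 0) → cf n (hderiv f) = 0 := by
    intro f n h
    rw [coeff_hderiv, h (n+1) le_rfl, mul_zero]
  have h0D : ∀ (f : PowerSeries HeatRing) (n : ℕ),
      (∀ m, m ≤ n + 1 → cf m f = 0) → cf n (dPS f) = 0 := by
    intro f n h
    rw [coeff_dPS, h n (by omega), dOp_zero]
  have hHe : hderiv (exp0 g) = hderiv g * exp0 g :=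
    exp0_deriv hderiv hderiv_add hderiv_smul hderiv_mul h0H g hg0
  have hDe : dPS (exp0 g) = dPS g * exp0 g :=
    exp0_deriv dPS dPS_add dPS_smul dPS_mul h0D g hg0
  -- key coefficient identity
  have key : hderiv g = Ch * (CV2 + dPS (dPS g) + (CV1 + dPS g) ^ 2) := by
    refine PowerSeries.ext fun n => ?_
    have hcg : ∀ k : ℕ, cf k g = if k = 0 then 0 else G k := fun k => PowerSeries.coeff_mk _ _
    have hw : ∀ a : ℕ, cf a (CV1 + dPS g) = dOp (G a) := by
      intro a
      rw [map_add, coeff_dPS, hcg, hCV1def, PowerSeries.coeff_C]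
      rcases eq_or_ne a 0 with rfl | ha
      · rw [if_pos rfl, if_pos rfl, dOp_zero, add_zero, hG0, dOp_X]; rfl
      · rw [if_neg ha, if_neg ha, zero_add]
    have hRHS : cf n (Ch * (CV2 + dPS (dPS g) + (CV1 + dPS g) ^ 2)) =
        MvPolynomial.C (1 / 2 : ℚ) * (dOp (dOp (G n)) +
          ∑ p ∈ Finset.HasAntidiagonal.antidiagonal n, dOp (G p.1) * dOp (G p.2)) := by
      rw [hChdef, PowerSeries.coeff_C_mul]
      congr 1
      rw [map_add, map_add, sq, PowerSeries.coeff_mul]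
      have hsum : ∑ p ∈ Finset.HasAntidiagonal.antidiagonal n, cf p.1 (CV1 + dPS g) * cf p.2 (CV1 + dPS g) =
          ∑ p ∈ Finset.HasAntidiagonal.antidiagonal n, dOp (G p.1) * dOp (G p.2) :=
        Finset.sum_congr rfl fun p _ => by rw [hw, hw]
      rw [hsum]
      congr 1
      rw [coeff_dPS, coeff_dPS, hcg, hCV2def, PowerSeries.coeff_C]
      rcases eq_or_ne n 0 with rfl | hn
      · rw [if_pos rfl, if_pos rfl, dOp_zero, dOp_zero, add_zero, hG0, dOp_X]
        show X (Sum.inl 2) = dOp (X (Sum.inl 1))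
        rw [dOp_X]; rfl
      · rw [if_neg hn, if_neg hn, zero_add]
    rw [hRHS, coeff_hderiv, hcg, if_neg (Nat.succ_ne_zero n)]
    have hr := hrec (n + 1) (by omega)
    have hc : ((n + 1 : ℕ) : HeatRing) = (n : HeatRing) + 1 := by push_cast; ring
    rw [hc, Nat.add_sub_cancel] at hr
    rw [hr]
    congr 2
    rw [Finset.Nat.sum_antidiagonal_eq_sum_range_succ_mk]
    refine Finset.sum_nbij' (fun r => r - 1) (fun k => k + 1) ?_ ?_ ?_ ?_ ?_
    · intro a ha
      simp only [Finset.mem_Icc] at ha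
      simp only [Finset.mem_range]
      omega
    · intro a ha
      simp only [Finset.mem_range] at ha
      simp only [Finset.mem_Icc]
      omega
    · intro a ha
      simp only [Finset.mem_Icc] at ha
      show a - 1 + 1 = a
      omega
    · intro a ha
      show a + 1 - 1 = a
      omega
    · intro a ha
      simp only [Finset.mem_Icc] at ha
      have h1 : n + 1 - a = n - (a - 1) := by omega
      rw [h1]
  -- assemble
  have hDZ : dPS (E * exp0 g) = (CV1 + dPS g) * (E * exp0 g) := by
    rw [dPS_mul, hDe, hEdef, dPS_C]
    have : dOp (X (Sum.inr ()) : HeatRing) = X (Sum.inl 1) * X (Sum.inr ()) := by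
      rw [dOp_X]; rfl
    rw [this, map_mul]
    ring
  have hDC : dPS (CV1 + dPS g) = CV2 + dPS (dPS g) := by
    rw [dPS_add, hCV1def, dPS_C]
    have : dOp (X (Sum.inl 1) : HeatRing) = X (Sum.inl 2) := by rw [dOp_X]; rfl
    rw [this, hCV2def]
  rw [hderiv_mul, hderiv_C, zero_mul, zero_add, hHe, key, hDZ, dPS_mul, hDZ, hDC]
  ring
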